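/- If L(i+1) - L(i) ≥ 2 for the Lehmer code of w ∈ S_n at some index i, then there exist at least two distinct indices p, q > i+1 with w(i) < w(p) < w(i+1) and w(i) < w(q) < w(i+1). -/
import Mathlib


/-- Lehmer code: `lehmer w i = #{j > i : w j < w i}`. -/
def lehmer {n : ℕ} (w : Equiv.Perm (Fin n)) (i : Fin n) : ℕ :=
  (Finset.univ.filter (fun j => i < j ∧ w j < w i)).card

/-- `w` contains the pattern `σ` (given as a function `Fin k → Fin k`). -/
def ContainsPattern {n k : ℕ} (w : Equiv.Perm (Fin n)) (σ : Fin k → Fin k) : Prop :=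
  ∃ f : Fin k → Fin n, StrictMono f ∧ ∀ a b : Fin k, σ a < σ b ↔ w (f a) < w (f b)

theorem stmt_2 {n : ℕ} (w : Equiv.Perm (Fin n)) (i : ℕ) (hi : i + 1 < n)
    (h : lehmer w ⟨i, Nat.lt_of_succ_lt hi⟩ + 2 ≤ lehmer w ⟨i + 1, hi⟩) :
    ∃ p q : Fin n, p ≠ q ∧ (⟨i + 1, hi⟩ : Fin n) < p ∧ (⟨i + 1, hi⟩ : Fin n) < q ∧
      w ⟨i, Nat.lt_of_succ_lt hi⟩ < w p ∧ w p < w ⟨i + 1, hi⟩ ∧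
      w ⟨i, Nat.lt_of_succ_lt hi⟩ < w q ∧ w q < w ⟨i + 1, hi⟩ := by
  set i₀ : Fin n := ⟨i, Nat.lt_of_succ_lt hi⟩ with hi₀
  set i₁ : Fin n := ⟨i + 1, hi⟩ with hi₁
  have h01 : i₀ < i₁ := by simp [hi₀, hi₁, Fin.lt_def]
  have hne : w i₀ ≠ w i₁ := w.injective.ne (Fin.ne_of_lt h01)
  rcases lt_or_gt_of_ne hne with hc | hc
  · -- w i₀ < w i₁
    set S₀ := Finset.univ.filter (fun j => i₀ < j ∧ w j < w i₀) with hS₀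
    set S₁ := Finset.univ.filter (fun j => i₁ < j ∧ w j < w i₁) with hS₁
    set D := Finset.univ.filter (fun j => i₁ < j ∧ w i₀ < w j ∧ w j < w i₁) with hD
    have hsub : S₁ ⊆ S₀ ∪ D := by
      intro j hj
      simp only [hS₀, hS₁, hD, Finset.mem_filter, Finset.mem_union, Finset.mem_univ,
        true_and] at hj ⊢
      obtain ⟨h1, h2⟩ := hj
      have h0j : i₀ < j := h01.trans h1
      rcases lt_trichotomy (w j) (w i₀) with hlt | heq | hgt
      · exact Or.inl ⟨h0j, hlt⟩
      · exact absurd (w.injective heq) (Fin.ne_of_gt h0j)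
      · exact Or.inr ⟨h1, hgt, h2⟩
    have hcard : S₁.card ≤ S₀.card + D.card :=
      (Finset.card_le_card hsub).trans (Finset.card_union_le _ _)
    have hL0 : lehmer w i₀ = S₀.card := rfl
    have hL1 : lehmer w i₁ = S₁.card := rfl
    rw [hL0, hL1] at h
    have h2 : 1 < D.card := by omega
    obtain ⟨p, hp, q, hq, hpq⟩ := Finset.one_lt_card.mp h2
    simp only [hD, Finset.mem_filter, Finset.mem_univ, true_and] at hp hq
    exact ⟨p, q, hpq, hp.1, hq.1, hp.2.1, hp.2.2, hq.2.1, hq.2.2⟩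
  · -- w i₁ < w i₀ : contradiction
    exfalso
    have hsub : Finset.univ.filter (fun j => i₁ < j ∧ w j < w i₁) ⊆
        Finset.univ.filter (fun j => i₀ < j ∧ w j < w i₀) := by
      intro j hj
      simp only [Finset.mem_filter, Finset.mem_univ, true_and] at hj ⊢
      exact ⟨h01.trans hj.1, hj.2.trans hc⟩
    have := Finset.card_le_card hsub
    have hL0 : lehmer w i₀ = (Finset.univ.filter (fun j => i₀ < j ∧ w j < w i₀)).card := rfl
    have hL1 : lehmer w i₁ = (Finset.univ.filter (fun j => i₁ < j ∧ w j < w i₁)).card := rfl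
    omega
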